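/- Let n ≥ 2 and let i be an index with 2i ≠ n+1 (i.e. i is not the middle index). The number of equi-n-squares whose row i is consecutive or reverse-consecutive and whose column i is consecutive or reverse-consecutive equals 2·(n²−2n+1)! / ((n−1)! · (n−2)!^{n−1}). -/

import Mathlib

open Nat Finset Filter

/-- An equi-`n`-square: an `n × n` array with entries in `Fin n` in which
every value appears exactly `n` times. -/
def IsEquiSquare (n : ℕ) (g : Fin n → Fin n → Fin n) : Prop :=
  ∀ k : Fin n, Nat.card {p : Fin n × Fin n // g p.1 p.2 = k} = n

/-- Row `i` is consecutive (1-indexed: entry in column `j` is `j`). -/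
def RowConsec {n : ℕ} (g : Fin n → Fin n → Fin n) (i : Fin n) : Prop :=
  ∀ j : Fin n, g i j = j

/-- Row `i` is reverse-consecutive (1-indexed: entry in column `j` is `n+1-j`). -/
def RowRevConsec {n : ℕ} (g : Fin n → Fin n → Fin n) (i : Fin n) : Prop :=
  ∀ j : Fin n, (g i j : ℕ) + (j : ℕ) + 1 = n

/-- Column `j` is consecutive (1-indexed: entry in row `i` is `i`). -/
def ColConsec {n : ℕ} (g : Fin n → Fin n → Fin n) (j : Fin n) : Prop :=
  ∀ i : Fin n, g i j = i

/-- Column `j` is reverse-consecutive (1-indexed: entry in row `i` is `n+1-i`). -/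
def ColRevConsec {n : ℕ} (g : Fin n → Fin n → Fin n) (j : Fin n) : Prop :=
  ∀ i : Fin n, (g i j : ℕ) + (i : ℕ) + 1 = n

private def sigmaFstFiber {β : Type*} (γ : β → Type*) (b : β) :
    {x : Σ c, γ c // x.1 = b} ≃ γ b where
  toFun x := x.2 ▸ x.1.2
  invFun v := ⟨⟨b, v⟩, rfl⟩
  left_inv := by rintro ⟨⟨c, v⟩, rfl⟩; rfl
  right_inv v := rfl

private lemma exists_fiber_card {α β : Type*} [Fintype α] [Fintype β] [DecidableEq β]
    (m : β → ℕ) (hm : ∑ b, m b = Fintype.card α) :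
    ∃ f₀ : α → β, ∀ b, Fintype.card {a // f₀ a = b} = m b := by
  have hcard : Fintype.card (Σ b, Fin (m b)) = Fintype.card α := by
    simp [Fintype.card_sigma, hm]
  let e : α ≃ Σ b, Fin (m b) := (Fintype.equivOfCardEq hcard).symm
  refine ⟨fun a => (e a).1, fun b => ?_⟩
  have e1 : {a // (e a).1 = b} ≃ {x : Σ c, Fin (m c) // x.1 = b} :=
    e.subtypeEquiv (fun a => Iff.rfl)
  rw [Fintype.card_congr (e1.trans (sigmaFstFiber _ b))]
  simp

private lemma card_fiber_prescribed {α β : Type*} [Fintype α] [Fintype β] [DecidableEq α]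
    [DecidableEq β] (m : β → ℕ) (hm : ∑ b, m b = Fintype.card α) :
    Fintype.card {f : α → β // ∀ b, Fintype.card {a // f a = b} = m b} * ∏ b, (m b)! =
      (Fintype.card α)! := by
  obtain ⟨f₀, hf₀⟩ := exists_fiber_card m hm
  -- stabilizer card
  have hstab : Fintype.card {g : Equiv.Perm α // f₀ ∘ g = f₀} = ∏ b, (m b)! := by
    rw [DomMulAct.stabilizer_card]
    exact Finset.prod_congr rfl fun b _ => by rw [hf₀]
  set S := {f : α → β // ∀ b, Fintype.card {a // f a = b} = m b} with hS
  -- the classifying map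
  have hfib : ∀ σ : Equiv.Perm α, ∀ b, Fintype.card {a // (f₀ ∘ σ) a = b} = m b := by
    intro σ b
    rw [← hf₀ b]
    exact Fintype.card_congr (σ.subtypeEquiv (fun a => Iff.rfl))
  let Φ : Equiv.Perm α → S := fun σ => ⟨f₀ ∘ σ, hfib σ⟩
  have key : ∀ s : S, Fintype.card {σ // Φ σ = s} = ∏ b, (m b)! := by
    intro s
    obtain ⟨f, hf⟩ := s
    -- an equiv with matching fibers
    have efib : ∀ c, {a // f a = c} ≃ {a // f₀ a = c} := fun c =>
      Fintype.equivOfCardEq (by rw [hf c, hf₀ c])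
    let τ : α ≃ α := Equiv.ofFiberEquiv efib
    have hτ : ∀ a, f₀ (τ a) = f a := fun a => Equiv.ofFiberEquiv_map efib a
    rw [← hstab]
    apply Fintype.card_congr
    refine ⟨fun σ => ⟨τ.symm.trans σ.1, ?_⟩, fun ρ => ⟨τ.trans ρ.1, ?_⟩, ?_, ?_⟩
    · have hσ' : f₀ ∘ (σ.1 : α → α) = f := congrArg Subtype.val σ.2
      funext a
      have h2 := congrFun hσ' (τ.symm a)
      simp only [Function.comp_apply, Equiv.trans_apply] at h2 ⊢
      rw [h2, ← hτ (τ.symm a), Equiv.apply_symm_apply]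
    · apply Subtype.ext
      show f₀ ∘ (τ.trans ρ.1 : α → α) = f
      funext a
      have h2 := congrFun ρ.2 (τ a)
      simp only [Function.comp_apply] at h2 ⊢
      simpa [h2, Equiv.trans_apply] using hτ a
    · intro ρ
      apply Subtype.ext
      apply Equiv.ext
      intro a
      simp
    · intro σ
      apply Subtype.ext
      apply Equiv.ext
      intro a
      simp
  have : Fintype.card (Equiv.Perm α) = Fintype.card S * ∏ b, (m b)! := by
    rw [Fintype.card_congr (Equiv.sigmaFiberEquiv Φ).symm, Fintype.card_sigma]
    simp [key, mul_comm]
  rw [← this, Fintype.card_perm]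




private lemma card_fiber_prescribed' {α β : Type*} [Fintype α] [Fintype β] [DecidableEq α]
    [DecidableEq β] (m : β → ℕ) (hm : ∑ b, m b = Nat.card α) :
    Nat.card {f : α → β // ∀ b, Nat.card {a // f a = b} = m b} * ∏ b, (m b)! =
      (Nat.card α)! := by
  have h : ∀ f : α → β, (∀ b, Nat.card {a // f a = b} = m b) ↔
      (∀ b, Fintype.card {a // f a = b} = m b) :=
    fun f => forall_congr' fun b => by rw [Nat.card_eq_fintype_card]
  rw [Nat.card_congr (Equiv.subtypeEquivRight h), Nat.card_eq_fintype_card,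
    Nat.card_eq_fintype_card]
  exact card_fiber_prescribed m (by rwa [Nat.card_eq_fintype_card] at hm)

section Rev

variable {n : ℕ}

/-- reversal of values preserves equi-squares and swaps consec/rev-consec. -/
lemma rev_equiSquare {g : Fin n → Fin n → Fin n} (h : IsEquiSquare n g) :
    IsEquiSquare n (fun a b => (g a b).rev) := by
  intro k
  have e : {p : Fin n × Fin n // (g p.1 p.2).rev = k} ≃ {p : Fin n × Fin n // g p.1 p.2 = k.rev} :=
    Equiv.subtypeEquivRight fun p => by
      constructor
      · rintro rfl; rw [Fin.rev_rev]
      · intro h'; rw [h', Fin.rev_rev]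
  rw [Nat.card_congr e]
  exact h k.rev

lemma rev_row {g : Fin n → Fin n → Fin n} {i : Fin n} (h : RowConsec g i) :
    RowRevConsec (fun a b => (g a b).rev) i := by
  intro j
  simp only [h j, Fin.rev]
  omega

lemma rev_col {g : Fin n → Fin n → Fin n} {i : Fin n} (h : ColConsec g i) :
    ColRevConsec (fun a b => (g a b).rev) i := by
  intro a
  simp only [h a, Fin.rev]
  omega

lemma rev_row' {g : Fin n → Fin n → Fin n} {i : Fin n} (h : RowRevConsec g i) :
    RowConsec (fun a b => (g a b).rev) i := by
  intro j
  have := h j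
  simp only [Fin.rev]
  apply Fin.ext
  simp only [Fin.val_mk]
  omega

lemma rev_col' {g : Fin n → Fin n → Fin n} {i : Fin n} (h : ColRevConsec g i) :
    ColConsec (fun a b => (g a b).rev) i := by
  intro a
  have := h a
  simp only [Fin.rev]
  apply Fin.ext
  simp only [Fin.val_mk]
  omega

/-- the bijection between the reverse-reverse and the consec-consec pieces. -/
def revEquiv :
    {g : Fin n → Fin n → Fin n // IsEquiSquare n g ∧ RowRevConsec g i ∧ ColRevConsec g i} ≃
    {g : Fin n → Fin n → Fin n // IsEquiSquare n g ∧ RowConsec g i ∧ ColConsec g i} where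
  toFun g := ⟨fun a b => (g.1 a b).rev, rev_equiSquare g.2.1, rev_row' g.2.2.1, rev_col' g.2.2.2⟩
  invFun g := ⟨fun a b => (g.1 a b).rev, rev_equiSquare g.2.1, rev_row g.2.2.1, rev_col g.2.2.2⟩
  left_inv g := by
    apply Subtype.ext
    funext a b
    simp [Fin.rev_rev]
  right_inv g := by
    apply Subtype.ext
    funext a b
    simp [Fin.rev_rev]

end Rev

section Decomp

variable {n : ℕ} (i : Fin n)

/-- The free cells: not in row `i` nor column `i`. -/
abbrev FreeCell (n : ℕ) (i : Fin n) := {p : Fin n × Fin n // p.1 ≠ i ∧ p.2 ≠ i}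

lemma decomp {g : Fin n → Fin n → Fin n} (hr : RowConsec g i) (hc : ColConsec g i)
    (k : Fin n) :
    Fintype.card {p : Fin n × Fin n // g p.1 p.2 = k} =
      1 + (if k = i then 0 else 1) + Fintype.card {a : FreeCell n i // g a.1.1 a.1.2 = k} := by
  classical
  rw [Fintype.card_subtype]
  have h1 : (univ.filter fun p : Fin n × Fin n => g p.1 p.2 = k).card =
      ((univ.filter fun p : Fin n × Fin n => g p.1 p.2 = k).filter fun p => p.1 = i).card +
      ((univ.filter fun p : Fin n × Fin n => g p.1 p.2 = k).filter fun p => ¬ p.1 = i).card :=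
    (Finset.card_filter_add_card_filter_not _).symm
  have h2 : ((univ.filter fun p : Fin n × Fin n => g p.1 p.2 = k).filter fun p => ¬ p.1 = i).card =
      (((univ.filter fun p : Fin n × Fin n => g p.1 p.2 = k).filter fun p => ¬ p.1 = i).filter
        fun p => p.2 = i).card +
      (((univ.filter fun p : Fin n × Fin n => g p.1 p.2 = k).filter fun p => ¬ p.1 = i).filter
        fun p => ¬ p.2 = i).card :=
    (Finset.card_filter_add_card_filter_not _).symm
  rw [h1, h2, add_assoc]
  congr 1
  · -- the row part: exactly the cell (i, k)
    have : ((univ.filter fun p : Fin n × Fin n => g p.1 p.2 = k).filter fun p => p.1 = i)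
        = {(i, k)} := by
      ext ⟨a, b⟩
      simp only [mem_filter, mem_univ, true_and, mem_singleton, Prod.mk.injEq]
      constructor
      · rintro ⟨h3, rfl⟩
        rw [hr b] at h3
        exact ⟨rfl, h3⟩
      · rintro ⟨rfl, rfl⟩
        exact ⟨hr _, rfl⟩
    rw [this, card_singleton]
  congr 1
  · -- the column part
    by_cases hk : k = i
    · have : (((univ.filter fun p : Fin n × Fin n => g p.1 p.2 = k).filter
          fun p => ¬ p.1 = i).filter fun p => p.2 = i) = ∅ := by
        ext ⟨a, b⟩
        simp only [mem_filter, mem_univ, true_and, notMem_empty, iff_false, not_and]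
        rintro ⟨h3, h4⟩ rfl
        rw [hc a] at h3
        exact h4 (h3.trans hk)
      rw [this, if_pos hk]
      simp
    · have : (((univ.filter fun p : Fin n × Fin n => g p.1 p.2 = k).filter
          fun p => ¬ p.1 = i).filter fun p => p.2 = i) = {(k, i)} := by
        ext ⟨a, b⟩
        simp only [mem_filter, mem_univ, true_and, mem_singleton, Prod.mk.injEq]
        constructor
        · rintro ⟨⟨h3, h4⟩, rfl⟩
          rw [hc a] at h3
          exact ⟨h3, rfl⟩
        · rintro ⟨rfl, rfl⟩
          exact ⟨⟨hc _, hk⟩, rfl⟩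
      rw [this, card_singleton, if_neg hk]
  · -- the free part
    rw [Fintype.card_congr (Equiv.subtypeSubtypeEquivSubtypeInter
      (fun p : Fin n × Fin n => p.1 ≠ i ∧ p.2 ≠ i) (fun p => g p.1 p.2 = k)),
      Fintype.card_subtype]
    congr 1
    rw [Finset.filter_filter, Finset.filter_filter]
    apply Finset.filter_congr
    intro p _
    simp only [ne_eq]
    tauto

end Decomp

section ConsecCount

variable (n : ℕ) (i : Fin n)

/-- extension of a free-cell filling by consecutive row/column `i`. -/
def extFun (f : FreeCell n i → Fin n) : Fin n → Fin n → Fin n :=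
  fun a b => if h1 : a = i then b else if h2 : b = i then a else f ⟨(a, b), h1, h2⟩

lemma extFun_row (f : FreeCell n i → Fin n) : RowConsec (extFun n i f) i := by
  intro j; simp [extFun]

lemma extFun_col (f : FreeCell n i → Fin n) : ColConsec (extFun n i f) i := by
  intro a
  by_cases h : a = i
  · subst h; simp [extFun]
  · simp [extFun, h]

def consecEquiv :
    {g : Fin n → Fin n → Fin n // IsEquiSquare n g ∧ RowConsec g i ∧ ColConsec g i} ≃
    {f : FreeCell n i → Fin n //
      ∀ k, Nat.card {a // f a = k} = if k = i then n - 1 else n - 2} where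
  toFun g := ⟨fun a => g.1 a.1.1 a.1.2, by
    intro k
    show Nat.card {a : FreeCell n i // g.1 a.1.1 a.1.2 = k} = _
    rw [Nat.card_eq_fintype_card]
    have h1 := g.2.1 k
    rw [Nat.card_eq_fintype_card, decomp i g.2.2.1 g.2.2.2 k] at h1
    have h2 : (1 : ℕ) ≤ n := le_trans (by norm_num) (Fin.pos i)
    by_cases hk : k = i
    · rw [if_pos hk]
      rw [if_pos hk] at h1
      omega
    · rw [if_neg hk]
      rw [if_neg hk] at h1
      have h3 : (2 : ℕ) ≤ n := by
        have : Nontrivial (Fin n) := ⟨⟨k, i, hk⟩⟩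
        exact (by simpa using Fintype.one_lt_card (α := Fin n) : 1 < n)
      omega⟩
  invFun f := ⟨extFun n i f.1, by
    refine ⟨?_, extFun_row n i f.1, extFun_col n i f.1⟩
    intro k
    rw [Nat.card_eq_fintype_card, decomp i (extFun_row n i f.1) (extFun_col n i f.1) k]
    have e : {a : FreeCell n i // extFun n i f.1 a.1.1 a.1.2 = k} ≃ {a // f.1 a = k} :=
      Equiv.subtypeEquivRight fun a => by
        simp only [extFun, dif_neg a.2.1, dif_neg a.2.2]
    rw [Fintype.card_congr e, ← Nat.card_eq_fintype_card, f.2 k]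
    by_cases hk : k = i
    · have h2 : (1 : ℕ) ≤ n := le_trans (by norm_num) (Fin.pos i)
      rw [if_pos hk, if_pos hk]
      omega
    · have h3 : (2 : ℕ) ≤ n := by
        have : Nontrivial (Fin n) := ⟨⟨k, i, hk⟩⟩
        exact (by simpa using Fintype.one_lt_card (α := Fin n) : 1 < n)
      rw [if_neg hk, if_neg hk]
      omega⟩
  left_inv g := by
    apply Subtype.ext
    funext a b
    simp only [extFun]
    split_ifs with h1 h2
    · subst h1; exact (g.2.2.1 b).symm
    · subst h2; exact (g.2.2.2 a).symm
    · rfl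
  right_inv f := by
    apply Subtype.ext
    funext a
    simp only [extFun, dif_neg a.2.1, dif_neg a.2.2]

lemma card_freeCell : Nat.card (FreeCell n i) = (n - 1) ^ 2 := by
  have e : FreeCell n i ≃ {a : Fin n // a ≠ i} × {b : Fin n // b ≠ i} :=
    Equiv.subtypeProdEquivProd (p := fun a : Fin n => a ≠ i) (q := fun b : Fin n => b ≠ i)
  rw [Nat.card_congr e, Nat.card_prod]
  have h : Nat.card {a : Fin n // a ≠ i} = n - 1 := by
    rw [Nat.card_eq_fintype_card]
    simp [Fintype.card_subtype_compl]
  rw [h, sq]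

set_option maxHeartbeats 400000 in
lemma consec_count (hn : 2 ≤ n) :
    Nat.card {g : Fin n → Fin n → Fin n //
        IsEquiSquare n g ∧ RowConsec g i ∧ ColConsec g i} *
      ((n - 1)! * (n - 2)! ^ (n - 1)) = ((n - 1) ^ 2)! := by
  have hm : ∑ k : Fin n, (if k = i then n - 1 else n - 2) = Nat.card (FreeCell n i) := by
    rw [card_freeCell, ← Finset.add_sum_erase _ _ (Finset.mem_univ i), if_pos rfl]
    have : ∀ k ∈ Finset.univ.erase i, (if k = i then n - 1 else n - 2) = n - 2 := by
      intro k hk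
      rw [if_neg (Finset.mem_erase.mp hk).1]
    rw [Finset.sum_congr rfl this, Finset.sum_const, Finset.card_erase_of_mem (Finset.mem_univ i),
      Finset.card_univ, Fintype.card_fin]
    obtain ⟨p, rfl⟩ : ∃ p, n = p + 2 := ⟨n - 2, by omega⟩
    show p + 1 + (p + 1) * p = (p + 1) ^ 2
    ring
  have hp : ∏ k : Fin n, (if k = i then n - 1 else n - 2)! = (n - 1)! * (n - 2)! ^ (n - 1) := by
    rw [← Finset.mul_prod_erase _ _ (Finset.mem_univ i), if_pos rfl]
    congr 1
    have : ∀ k ∈ Finset.univ.erase i, (if k = i then n - 1 else n - 2)! = (n - 2)! := by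
      intro k hk
      rw [if_neg (Finset.mem_erase.mp hk).1]
    rw [Finset.prod_congr rfl this, Finset.prod_const, Finset.card_erase_of_mem (Finset.mem_univ i),
      Finset.card_univ, Fintype.card_fin]
  rw [Nat.card_congr (consecEquiv n i), ← hp, ← card_freeCell n i]
  exact card_fiber_prescribed' (fun k : Fin n => if k = i then n - 1 else n - 2) hm

/-- For `n ≥ 2` and a non-middle index `i` (1-indexed: `2(i) ≠ n+1`), the number of
equi-`n`-squares whose row `i` and column `i` are each consecutive or reverse-consecutive
equals `2·(n²−2n+1)! / ((n−1)!·(n−2)!^{n−1})`. -/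
theorem card_rowI_colI (n : ℕ) (hn : 2 ≤ n) (i : Fin n)
    (hi : 2 * ((i : ℕ) + 1) ≠ n + 1) :
    (Nat.card {g : Fin n → Fin n → Fin n //
        IsEquiSquare n g ∧ (RowConsec g i ∨ RowRevConsec g i) ∧
          (ColConsec g i ∨ ColRevConsec g i)} : ℚ) =
      2 * ((n ^ 2 - 2 * n + 1)! : ℚ) / (((n - 1)! : ℚ) * ((n - 2)! : ℚ) ^ (n - 1)) := by
  classical
  have hiff : ∀ g : Fin n → Fin n → Fin n,
      (IsEquiSquare n g ∧ (RowConsec g i ∨ RowRevConsec g i) ∧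
        (ColConsec g i ∨ ColRevConsec g i)) ↔
      ((IsEquiSquare n g ∧ RowConsec g i ∧ ColConsec g i) ∨
        (IsEquiSquare n g ∧ RowRevConsec g i ∧ ColRevConsec g i)) := by
    intro g
    constructor
    · rintro ⟨he, hr | hr, hc | hc⟩
      · exact Or.inl ⟨he, hr, hc⟩
      · exfalso
        have h1 : g i i = i := hr i
        have h2 := hc i
        rw [h1] at h2
        omega
      · exfalso
        have h1 : g i i = i := hc i
        have h2 := hr i
        rw [h1] at h2
        omega
      · exact Or.inr ⟨he, hr, hc⟩
    · rintro (⟨he, hr, hc⟩ | ⟨he, hr, hc⟩)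
      exacts [⟨he, Or.inl hr, Or.inl hc⟩, ⟨he, Or.inr hr, Or.inr hc⟩]
  have hdisj : Disjoint (fun g : Fin n → Fin n → Fin n =>
      IsEquiSquare n g ∧ RowConsec g i ∧ ColConsec g i)
      (fun g => IsEquiSquare n g ∧ RowRevConsec g i ∧ ColRevConsec g i) := by
    rw [Pi.disjoint_iff]
    intro g
    rw [Prop.disjoint_iff]
    rintro ⟨⟨_, hr, _⟩, ⟨_, hr', _⟩⟩
    have h0 : (0 : ℕ) < n := by omega
    have e1 := hr ⟨0, h0⟩
    have e2 := hr' ⟨0, h0⟩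
    rw [e1] at e2
    simp at e2
    omega
  rw [Nat.card_congr ((Equiv.subtypeEquivRight hiff).trans (subtypeOrEquiv _ _ hdisj)),
    Nat.card_sum, Nat.card_congr (revEquiv (n := n) (i := i))]
  have key := consec_count n i hn
  set N1 := Nat.card {g : Fin n → Fin n → Fin n //
      IsEquiSquare n g ∧ RowConsec g i ∧ ColConsec g i} with hN1
  have hsq : n ^ 2 - 2 * n + 1 = (n - 1) ^ 2 := by
    obtain ⟨p, rfl⟩ : ∃ p, n = p + 2 := ⟨n - 2, by omega⟩
    have h1 : (p + 2) ^ 2 = p ^ 2 + 4 * p + 4 := by ring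
    have h2 : (p + 2 - 1) ^ 2 = p ^ 2 + 2 * p + 1 := by
      show (p + 1) ^ 2 = _
      ring
    omega
  rw [hsq]
  have hD : ((n - 1)! : ℚ) * ((n - 2)! : ℚ) ^ (n - 1) ≠ 0 := by positivity
  rw [eq_div_iff hD]
  have keyQ : (N1 : ℚ) * (((n - 1)! : ℚ) * ((n - 2)! : ℚ) ^ (n - 1)) = (((n - 1) ^ 2)! : ℚ) := by
    exact_mod_cast key
  push_cast
  calc ((N1 : ℚ) + N1) * (((n - 1)! : ℚ) * ((n - 2)! : ℚ) ^ (n - 1))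
      = 2 * ((N1 : ℚ) * (((n - 1)! : ℚ) * ((n - 2)! : ℚ) ^ (n - 1))) := by ring
    _ = 2 * (((n - 1) ^ 2)! : ℚ) := by rw [keyQ]
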